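/- Let h be an idempotent endomorphism of the free monoid M on a set S (h ∘ h = h). If s ∈ S and h(of s) = u * (of s) * v for some u, v ∈ M with h(u) = 1 and h(v) = 1, then h fixes h(of s), i.e. h(h(of s)) = h(of s), and moreover the word h(of s) contains exactly one occurrence of the letter s. -/

import Mathlib

open FreeMonoid

lemma aux_kill {S : Type u} (h : FreeMonoid S →* FreeMonoid S) :
    ∀ (l : List S), h (FreeMonoid.ofList l) = 1 → ∀ s ∈ l, h (of s) = 1 := by
  intro l
  induction l with
  | nil => intro _ s hs; exact absurd hs List.not_mem_nil
  | cons a t ih =>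
    intro h1 s hs
    have : FreeMonoid.ofList (a :: t) = of a * FreeMonoid.ofList t := rfl
    rw [this, map_mul] at h1
    have h2 : (h (of a)).toList ++ (h (FreeMonoid.ofList t)).toList = [] := by
      have := congrArg FreeMonoid.toList h1
      simpa [FreeMonoid.toList_mul] using this
    obtain ⟨ha, ht⟩ := List.append_eq_nil_iff.mp h2
    rcases List.mem_cons.mp hs with hs | hs
    · subst hs; exact FreeMonoid.toList.injective (by simpa using ha)
    · exact ih (FreeMonoid.toList.injective (by simpa using ht)) s hs

theorem idempotent_fixes_image_generator {S : Type u} [DecidableEq S]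
    (h : FreeMonoid S →* FreeMonoid S) (hidem : ∀ x, h (h x) = h x)
    (s : S) (u v : FreeMonoid S)
    (hs : h (of s) = u * of s * v) (hu : h u = 1) (hv : h v = 1) :
    h (h (of s)) = h (of s) ∧ (h (of s)).toList.count s = 1 := by
  refine ⟨hidem _, ?_⟩
  have hne : h (of s) ≠ 1 := by
    intro h0
    have := congrArg FreeMonoid.toList (h0 ▸ hs)
    simp [FreeMonoid.toList_mul] at this
  have hcu : s ∉ u.toList := by
    intro hmem
    exact hne (aux_kill h u.toList (by simpa using hu) s hmem)
  have hcv : s ∉ v.toList := by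
    intro hmem
    exact hne (aux_kill h v.toList (by simpa using hv) s hmem)
  rw [hs]
  simp [FreeMonoid.toList_mul, List.count_append, List.count_eq_zero.mpr hcu,
    List.count_eq_zero.mpr hcv]
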